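/- Let α > 1, σ > 0, k > 0, c := σ/(αk), f(R) := √(1 + 4c/R + c²/R²) and θ₊(R) := (2 + c/R + f(R))/(3α). Then the plastic energy term E^{pl}_R(θ₊(R)) := σR²(1 − θ₊(R)²) satisfies E^{pl}_R(θ₊(R)) = σR²(1 − α⁻²) − (2σ²/(α³k))·R + o(R) as R → +∞; equivalently, lim_{R→∞} ( σR²(1 − θ₊(R)²) − σR²(1 − α⁻²) )/R = −2σ²/(α³k). -/

import Mathlib

open Filter

noncomputable section

/-- The discriminant factor `f(R) = √(1 + 4c/R + c²/R²)`. -/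
def fdisc (c R : ℝ) : ℝ := Real.sqrt (1 + 4*c/R + c^2/R^2)

/-- The critical point `θ₊(R) = (2 + c/R + f(R))/(3α)`. -/
def θplus (α c R : ℝ) : ℝ := (2 + c/R + fdisc c R) / (3*α)

/-- The critical point `θ₋(R) = (2 + c/R − f(R))/(3α)`. -/
def θminus (α c R : ℝ) : ℝ := (2 + c/R - fdisc c R) / (3*α)

/-- The total energy polynomial `P_{k,R}(θ) = kR³θ(αθ−1)² + σR²(1−θ²)`. -/
def Ptot (α σ k R θ : ℝ) : ℝ := k*R^3*θ*(α*θ - 1)^2 + σ*R^2*(1 - θ^2)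

/-- the plastic energy at the minimizer satisfies
`E^{pl}_R(θ₊(R)) = σR²(1 − α⁻²) − (2σ²/(α³k))R + o(R)` as `R → +∞`. -/
theorem plastic_part_expansion (α σ k : ℝ) (hα : 1 < α) (hσ : 0 < σ) (hk : 0 < k) :
    Tendsto (fun R : ℝ =>
        (σ * R^2 * (1 - θplus α (σ/(α*k)) R ^ 2) - σ * R^2 * (1 - (α^2)⁻¹)) / R)
      atTop (nhds (-2 * σ^2 / (α^3 * k))) := by
  set c : ℝ := σ/(α*k) with hc
  have hα0 : (0:ℝ) < α := lt_trans one_pos hα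
  have hcpos : 0 < c := div_pos hσ (mul_pos hα0 hk)
  clear_value c
  -- limits of basic pieces
  have h1 : Tendsto (fun R : ℝ => c/R) atTop (nhds 0) :=
    tendsto_const_nhds.div_atTop tendsto_id
  have h1' : Tendsto (fun R : ℝ => c^2/R) atTop (nhds 0) :=
    tendsto_const_nhds.div_atTop tendsto_id
  have h2 : Tendsto (fun R : ℝ => c^2/R^2) atTop (nhds 0) :=
    tendsto_const_nhds.div_atTop (tendsto_pow_atTop two_ne_zero)
  have h4 : Tendsto (fun R : ℝ => 4*c/R) atTop (nhds 0) := by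
    have := h1.const_mul 4
    simpa [mul_div_assoc] using this
  have hinner : Tendsto (fun R : ℝ => 1 + 4*c/R + c^2/R^2) atTop (nhds 1) := by
    have h0 : Tendsto (fun _ : ℝ => (1:ℝ)) atTop (nhds 1) := tendsto_const_nhds
    have := (h0.add h4).add h2
    simpa using this
  have hf : Tendsto (fun R => fdisc c R) atTop (nhds 1) := by
    have := (Real.continuous_sqrt.tendsto 1).comp hinner
    simpa [fdisc, Function.comp_def] using this
  have hθ : Tendsto (fun R => θplus α c R) atTop (nhds (α⁻¹)) := by
    have h0 : Tendsto (fun _ : ℝ => (2:ℝ)) atTop (nhds 2) := tendsto_const_nhds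
    have := ((h0.add h1).add hf).div_const (3*α)
    have h3 : ((2:ℝ) + 0 + 1) / (3*α) = α⁻¹ := by
      field_simp
      norm_num
    rw [h3] at this
    exact this
  -- limit of the rewritten form of R*(f-1)
  have hB : Tendsto (fun R : ℝ => (4*c + c^2/R)/(fdisc c R + 1)) atTop (nhds (2*c)) := by
    have h0 : Tendsto (fun _ : ℝ => 4*c) atTop (nhds (4*c)) := tendsto_const_nhds
    have hnum : Tendsto (fun R : ℝ => 4*c + c^2/R) atTop (nhds (4*c + 0)) :=
      h0.add h1'
    have hden : Tendsto (fun R : ℝ => fdisc c R + 1) atTop (nhds (1 + 1)) :=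
      hf.add tendsto_const_nhds
    have h := hnum.div hden (by norm_num)
    have heq : (4*c + 0) / ((1:ℝ) + 1) = 2*c := by ring
    rw [heq] at h
    exact h.congr fun x => rfl
  -- the auxiliary function and its limit
  have hG : Tendsto (fun R : ℝ =>
      σ * (-(c + (4*c + c^2/R)/(fdisc c R + 1))/(3*α)) * (α⁻¹ + θplus α c R)) atTop
      (nhds (-2 * σ^2 / (α^3 * k))) := by
    have h0 : Tendsto (fun _ : ℝ => c) atTop (nhds c) := tendsto_const_nhds
    have h0' : Tendsto (fun _ : ℝ => α⁻¹) atTop (nhds α⁻¹) := tendsto_const_nhds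
    have hval : σ * (-(c + 2*c)/(3*α)) * (α⁻¹ + α⁻¹) = -2 * σ^2 / (α^3 * k) := by
      rw [hc]; field_simp; ring
    rw [← hval]
    exact ((((h0.add hB).neg).div_const (3*α)).const_mul σ).mul (h0'.add hθ)
  -- eventual equality
  refine hG.congr' ?_
  filter_upwards [eventually_gt_atTop (0:ℝ)] with R hR
  have hR0 : R ≠ 0 := ne_of_gt hR
  have hα' : α ≠ 0 := ne_of_gt hα0
  set f : ℝ := fdisc c R with hfdef
  have hfnn : 0 ≤ f := Real.sqrt_nonneg _
  have hf1 : f + 1 ≠ 0 := by positivity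
  have hfsq : f^2 = 1 + 4*c/R + c^2/R^2 := by
    rw [hfdef, fdisc, Real.sq_sqrt]
    positivity
  show σ * (-(c + (4*c + c^2/R)/(f + 1))/(3*α)) * (α⁻¹ + θplus α c R)
      = (σ * R^2 * (1 - θplus α c R ^ 2) - σ * R^2 * (1 - (α^2)⁻¹)) / R
  have e1 : R*(f-1)*(f+1) = 4*c + c^2/R := by
    have h' : R*(f-1)*(f+1) = R*(f^2 - 1) := by ring
    rw [h', hfsq]
    field_simp
    ring
  have e2 : (4*c + c^2/R)/(f + 1) = R*(f-1) := by
    rw [← e1]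
    field_simp
  rw [e2, θplus, ← hfdef]
  field_simp
  ring
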